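/- Let H be an entropy, with maximal extension D̄_H and minimal extension D̲_H. Then: (i) both D̄_H and D̲_H satisfy the data-processing inequality, i.e. (p,q) ≽ (p',q') implies D̄_H(p'‖q') ≤ D̄_H(p‖q) and D̲_H(p'‖q') ≤ D̲_H(p‖q), and both vanish at (1‖1); (ii) D̲_H(p‖q) ≤ D̄_H(p‖q) for all n ∈ ℕ and p,q ∈ P(n); (iii) for all m,n ∈ ℕ, p,q ∈ P(n) and p',q' ∈ P(m): D̲_H(p⊗p'‖q⊗q') ≥ D̲_H(p‖q) + D̲_H(p'‖q') and D̄_H(p⊗p'‖q⊗q') ≤ D̄_H(p‖q) + D̄_H(p'‖q'). -/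

import Mathlib

open scoped BigOperators ENNReal

/-- A probability vector: nonnegative entries summing to 1. -/
def IsProbVec {n : ℕ} (p : Fin n → ℝ) : Prop :=
  (∀ i, 0 ≤ p i) ∧ ∑ i, p i = 1

/-- The uniform probability vector on `n` outcomes. -/
noncomputable def uniform (n : ℕ) : Fin n → ℝ := fun _ => (n : ℝ)⁻¹

/-- Kronecker (tensor) product of two vectors. -/
noncomputable def kron {n m : ℕ} (p : Fin n → ℝ) (q : Fin m → ℝ) : Fin (n * m) → ℝ :=
  fun i => p (finProdFinEquiv.symm i).1 * q (finProdFinEquiv.symm i).2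

/-- Sum of the `k` largest entries (for vectors with nonnegative entries):
the supremum of sums over subsets of at most `k` indices. -/
noncomputable def maxPartialSum {n : ℕ} (p : Fin n → ℝ) (k : ℕ) : ℝ :=
  sSup { x | ∃ s : Finset (Fin n), s.card ≤ k ∧ ∑ i ∈ s, p i = x }

/-- `p` majorises `q`: every partial sum of the `k` largest entries of `p`
dominates that of `q` (entries beyond a vector's length count as 0). -/
def Majorizes {n m : ℕ} (p : Fin n → ℝ) (q : Fin m → ℝ) : Prop :=
  ∀ k : ℕ, maxPartialSum q k ≤ maxPartialSum p k

/-- A channel: an `n × m` row-stochastic matrix. -/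
def IsStochastic {n m : ℕ} (W : Matrix (Fin n) (Fin m) ℝ) : Prop :=
  (∀ i j, 0 ≤ W i j) ∧ ∀ i, ∑ j, W i j = 1

/-- Relative majorisation of pairs: some channel maps `(p, q)` to `(p', q')`. -/
def RelMaj {n m : ℕ} (p q : Fin n → ℝ) (p' q' : Fin m → ℝ) : Prop :=
  ∃ W : Matrix (Fin n) (Fin m) ℝ, IsStochastic W ∧
    Matrix.vecMul p W = p' ∧ Matrix.vecMul q W = q'

/-- An entropy: a `[0,∞)`-valued function on probability vectors of all finite dimensions
that is monotone under mixing (majorisation), additive for Kronecker products,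
and normalised so that `H(u₂) = log 2` (binary logarithm). -/
structure IsEntropy (H : (n : ℕ) → (Fin n → ℝ) → ℝ) : Prop where
  nonneg : ∀ {n : ℕ} (p : Fin n → ℝ), IsProbVec p → 0 ≤ H n p
  mono : ∀ {n m : ℕ} (p : Fin n → ℝ) (p' : Fin m → ℝ),
    IsProbVec p → IsProbVec p' → Majorizes p p' → H n p ≤ H m p'
  additive : ∀ {n m : ℕ} (p : Fin n → ℝ) (q : Fin m → ℝ),
    IsProbVec p → IsProbVec q → H (n * m) (kron p q) = H n p + H m q
  normalized : H 2 (uniform 2) = Real.logb 2 2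

/-- A monotone divergence: a `[0,∞]`-valued function on pairs of probability vectors of
equal finite dimension satisfying the data-processing inequality and `𝔻(1‖1) = 0`. -/
structure IsMonotoneDivergence (D : (n : ℕ) → (Fin n → ℝ) → (Fin n → ℝ) → ℝ≥0∞) : Prop where
  dpi : ∀ {n m : ℕ} (p q : Fin n → ℝ) (p' q' : Fin m → ℝ),
    IsProbVec p → IsProbVec q → IsProbVec p' → IsProbVec q' →
    RelMaj p q p' q' → D m p' q' ≤ D n p q
  normalized : D 1 (fun _ => 1) (fun _ => 1) = 0

/-- A relative entropy: data-processing inequality, additivity for Kronecker products,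
and the normalisation `𝔻(e₁‖u₂) = log 2` (binary logarithm). -/
structure IsRelativeEntropy (D : (n : ℕ) → (Fin n → ℝ) → (Fin n → ℝ) → ℝ≥0∞) : Prop where
  dpi : ∀ {n m : ℕ} (p q : Fin n → ℝ) (p' q' : Fin m → ℝ),
    IsProbVec p → IsProbVec q → IsProbVec p' → IsProbVec q' →
    RelMaj p q p' q' → D m p' q' ≤ D n p q
  additive : ∀ {n m : ℕ} (p₁ q₁ : Fin n → ℝ) (p₂ q₂ : Fin m → ℝ),
    IsProbVec p₁ → IsProbVec q₁ → IsProbVec p₂ → IsProbVec q₂ →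
    D (n * m) (kron p₁ p₂) (kron q₁ q₂) = D n p₁ q₁ + D m p₂ q₂
  normalized : D 2 ![1, 0] ![1/2, 1/2] = ENNReal.ofReal (Real.logb 2 2)

/-- The maximal extension of an entropy `H`:
`D̄_H(p‖q) := inf { log k − H(r) : k ∈ ℕ, r ∈ P(k), (r, u_k) ≽ (p, q) }`. -/
noncomputable def DmaxExt (H : (n : ℕ) → (Fin n → ℝ) → ℝ) :
    (n : ℕ) → (Fin n → ℝ) → (Fin n → ℝ) → ℝ≥0∞ :=
  fun _ p q => ⨅ (k : ℕ) (r : Fin k → ℝ) (_ : IsProbVec r)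
    (_ : RelMaj r (uniform k) p q), ENNReal.ofReal (Real.logb 2 k - H k r)

/-- The minimal extension of an entropy `H`:
`D̲_H(p‖q) := sup { log k − H(r) : k ∈ ℕ, r ∈ P(k), (p, q) ≽ (r, u_k) }`. -/
noncomputable def DminExt (H : (n : ℕ) → (Fin n → ℝ) → ℝ) :
    (n : ℕ) → (Fin n → ℝ) → (Fin n → ℝ) → ℝ≥0∞ :=
  fun _ p q => ⨆ (k : ℕ) (r : Fin k → ℝ) (_ : IsProbVec r)
    (_ : RelMaj p q r (uniform k)), ENNReal.ofReal (Real.logb 2 k - H k r)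

namespace Stmt9Aux

open Matrix Finset

/-! ### Basic probability-vector facts -/

lemma isProbVec_one : IsProbVec (fun _ : Fin 1 => (1 : ℝ)) :=
  ⟨fun _ => one_pos.le, by simp⟩

lemma uniform_one : uniform 1 = fun _ : Fin 1 => (1 : ℝ) := by
  funext i; simp [uniform]

lemma isProbVec_pos {n : ℕ} {p : Fin n → ℝ} (h : IsProbVec p) : 0 < n := by
  rcases Nat.eq_zero_or_pos n with rfl | h'
  · exfalso; simpa using h.2
  · exact h'

lemma isProbVec_uniform {n : ℕ} (hn : 0 < n) : IsProbVec (uniform n) := by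
  refine ⟨fun i => by simp only [uniform]; positivity, ?_⟩
  have hn' : (n : ℝ) ≠ 0 := Nat.cast_ne_zero.mpr hn.ne'
  simp [uniform, Finset.sum_const, Finset.card_univ, nsmul_eq_mul]
  field_simp

lemma vecMul_apply {n m : ℕ} (v : Fin n → ℝ) (W : Matrix (Fin n) (Fin m) ℝ) (j : Fin m) :
    Matrix.vecMul v W j = ∑ i, v i * W i j := by
  simp [Matrix.vecMul, dotProduct]

lemma sum_kron {n m : ℕ} (g : Fin n → Fin m → ℝ) :
    ∑ i : Fin (n * m), g (finProdFinEquiv.symm i).1 (finProdFinEquiv.symm i).2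
      = ∑ a, ∑ b, g a b := by
  calc ∑ i : Fin (n * m), g (finProdFinEquiv.symm i).1 (finProdFinEquiv.symm i).2
      = ∑ x : Fin n × Fin m, g x.1 x.2 :=
        Equiv.sum_comp finProdFinEquiv.symm (fun x => g x.1 x.2)
    _ = ∑ a, ∑ b, g a b := Fintype.sum_prod_type (fun x => g x.1 x.2)

lemma kron_isProbVec {n m : ℕ} {p : Fin n → ℝ} {q : Fin m → ℝ}
    (hp : IsProbVec p) (hq : IsProbVec q) : IsProbVec (kron p q) := by
  constructor
  · intro i; exact mul_nonneg (hp.1 _) (hq.1 _)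
  · show ∑ i : Fin (n * m), p (finProdFinEquiv.symm i).1 * q (finProdFinEquiv.symm i).2 = 1
    rw [sum_kron (fun a b => p a * q b), ← Finset.sum_mul_sum, hp.2, hq.2, one_mul]

lemma kron_uniform (n m : ℕ) : kron (uniform n) (uniform m) = uniform (n * m) := by
  funext i
  show (n : ℝ)⁻¹ * (m : ℝ)⁻¹ = ((n * m : ℕ) : ℝ)⁻¹
  push_cast
  rw [mul_inv]

/-! ### Channels -/

lemma isStochastic_mul {n m l : ℕ} {W : Matrix (Fin n) (Fin m) ℝ}
    {V : Matrix (Fin m) (Fin l) ℝ} (hW : IsStochastic W) (hV : IsStochastic V) :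
    IsStochastic (W * V) := by
  constructor
  · intro i j
    rw [Matrix.mul_apply]
    exact Finset.sum_nonneg fun k _ => mul_nonneg (hW.1 i k) (hV.1 k j)
  · intro i
    simp_rw [Matrix.mul_apply]
    rw [Finset.sum_comm]
    simp_rw [← Finset.mul_sum, hV.2, mul_one]
    exact hW.2 i

lemma relMaj_trans {n m l : ℕ} {p q : Fin n → ℝ} {p' q' : Fin m → ℝ} {p'' q'' : Fin l → ℝ}
    (h1 : RelMaj p q p' q') (h2 : RelMaj p' q' p'' q'') : RelMaj p q p'' q'' := by
  obtain ⟨W, hW, hWp, hWq⟩ := h1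
  obtain ⟨V, hV, hVp, hVq⟩ := h2
  exact ⟨W * V, isStochastic_mul hW hV,
    by rw [← Matrix.vecMul_vecMul, hWp, hVp], by rw [← Matrix.vecMul_vecMul, hWq, hVq]⟩

lemma relMaj_to_one {n : ℕ} {p q : Fin n → ℝ} (hp : IsProbVec p) (hq : IsProbVec q) :
    RelMaj p q (fun _ : Fin 1 => (1 : ℝ)) (uniform 1) := by
  refine ⟨fun _ _ => 1, ⟨fun _ _ => one_pos.le, fun i => by simp⟩, ?_, ?_⟩
  · funext j; erw [vecMul_apply]; simpa using hp.2
  · funext j; erw [vecMul_apply, uniform_one]; simpa using hq.2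

lemma relMaj_kron {n m n' m' : ℕ} {p q : Fin n → ℝ} {p' q' : Fin m → ℝ}
    {r s : Fin n' → ℝ} {r' s' : Fin m' → ℝ}
    (h1 : RelMaj p q p' q') (h2 : RelMaj r s r' s') :
    RelMaj (kron p r) (kron q s) (kron p' r') (kron q' s') := by
  obtain ⟨W, hW, hWp, hWq⟩ := h1
  obtain ⟨V, hV, hVp, hVq⟩ := h2
  refine ⟨fun x y => W (finProdFinEquiv.symm x).1 (finProdFinEquiv.symm y).1 *
      V (finProdFinEquiv.symm x).2 (finProdFinEquiv.symm y).2, ⟨?_, ?_⟩, ?_, ?_⟩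
  · intro i j
    exact mul_nonneg (hW.1 _ _) (hV.1 _ _)
  · intro i
    rw [sum_kron (fun a b => W (finProdFinEquiv.symm i).1 a * V (finProdFinEquiv.symm i).2 b),
      ← Finset.sum_mul_sum, hW.2, hV.2, one_mul]
  · funext y
    erw [vecMul_apply]
    show ∑ x : Fin (n * n'), (p (finProdFinEquiv.symm x).1 * r (finProdFinEquiv.symm x).2) *
        (W (finProdFinEquiv.symm x).1 (finProdFinEquiv.symm y).1 *
         V (finProdFinEquiv.symm x).2 (finProdFinEquiv.symm y).2) = kron p' r' y
    rw [sum_kron (fun a b => (p a * r b) *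
      (W a (finProdFinEquiv.symm y).1 * V b (finProdFinEquiv.symm y).2))]
    have : ∀ a, ∀ b, (p a * r b) * (W a (finProdFinEquiv.symm y).1 *
        V b (finProdFinEquiv.symm y).2) =
        (p a * W a (finProdFinEquiv.symm y).1) * (r b * V b (finProdFinEquiv.symm y).2) := by
      intro a b; ring
    simp_rw [this]
    rw [← Finset.sum_mul_sum]
    have e1 := congrFun hWp (finProdFinEquiv.symm y).1
    have e2 := congrFun hVp (finProdFinEquiv.symm y).2
    rw [vecMul_apply] at e1 e2
    rw [e1, e2]
    rfl
  · funext y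
    erw [vecMul_apply]
    show ∑ x : Fin (n * n'), (q (finProdFinEquiv.symm x).1 * s (finProdFinEquiv.symm x).2) *
        (W (finProdFinEquiv.symm x).1 (finProdFinEquiv.symm y).1 *
         V (finProdFinEquiv.symm x).2 (finProdFinEquiv.symm y).2) = kron q' s' y
    rw [sum_kron (fun a b => (q a * s b) *
      (W a (finProdFinEquiv.symm y).1 * V b (finProdFinEquiv.symm y).2))]
    have : ∀ a, ∀ b, (q a * s b) * (W a (finProdFinEquiv.symm y).1 *
        V b (finProdFinEquiv.symm y).2) =
        (q a * W a (finProdFinEquiv.symm y).1) * (s b * V b (finProdFinEquiv.symm y).2) := by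
      intro a b; ring
    simp_rw [this]
    rw [← Finset.sum_mul_sum]
    have e1 := congrFun hWq (finProdFinEquiv.symm y).1
    have e2 := congrFun hVq (finProdFinEquiv.symm y).2
    rw [vecMul_apply] at e1 e2
    rw [e1, e2]
    rfl

/-! ### maxPartialSum facts -/

lemma mps_mem {n : ℕ} (p : Fin n → ℝ) {k : ℕ} {s : Finset (Fin n)} (hs : s.card ≤ k) :
    (∑ i ∈ s, p i) ∈ { x | ∃ s : Finset (Fin n), s.card ≤ k ∧ ∑ i ∈ s, p i = x } :=
  ⟨s, hs, rfl⟩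

lemma mps_bddAbove {n : ℕ} (p : Fin n → ℝ) (k : ℕ) :
    BddAbove { x | ∃ s : Finset (Fin n), s.card ≤ k ∧ ∑ i ∈ s, p i = x } := by
  have hfin : { x | ∃ s : Finset (Fin n), s.card ≤ k ∧ ∑ i ∈ s, p i = x }.Finite := by
    have hsub : { x | ∃ s : Finset (Fin n), s.card ≤ k ∧ ∑ i ∈ s, p i = x } ⊆
        (fun s : Finset (Fin n) => ∑ i ∈ s, p i) '' Set.univ := by
      rintro x ⟨s, -, rfl⟩; exact ⟨s, trivial, rfl⟩
    exact (Set.finite_univ.image _).subset hsub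
  exact hfin.bddAbove

lemma le_maxPartialSum {n : ℕ} (p : Fin n → ℝ) {k : ℕ} {s : Finset (Fin n)} (hs : s.card ≤ k) :
    ∑ i ∈ s, p i ≤ maxPartialSum p k :=
  le_csSup (mps_bddAbove p k) (mps_mem p hs)

lemma maxPartialSum_le {n : ℕ} {p : Fin n → ℝ} {k : ℕ} {a : ℝ}
    (h : ∀ s : Finset (Fin n), s.card ≤ k → ∑ i ∈ s, p i ≤ a) :
    maxPartialSum p k ≤ a := by
  apply csSup_le
  · exact ⟨0, ∅, by simp, by simp⟩
  · rintro x ⟨s, hs, rfl⟩; exact h s hs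

lemma maxPartialSum_nonneg {n : ℕ} {p : Fin n → ℝ} (hp : ∀ i, 0 ≤ p i) (k : ℕ) :
    0 ≤ maxPartialSum p k := by
  have := le_maxPartialSum p (s := (∅ : Finset (Fin n))) (k := k) (by simp)
  simpa using this

lemma exists_topSet {n : ℕ} (p : Fin n → ℝ) (t : ℕ) :
    ∃ s : Finset (Fin n), s.card = min t n ∧ ∀ i ∈ s, ∀ j, j ∉ s → p j ≤ p i := by
  induction t with
  | zero => exact ⟨∅, by simp, by simp⟩
  | succ t ih =>
    obtain ⟨s, hcard, htop⟩ := ih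
    by_cases h : n ≤ t
    · refine ⟨s, ?_, htop⟩
      rw [hcard]; omega
    · push_neg at h
      have hclt : s.card < n := by rw [hcard]; omega
      have hcompl : sᶜ.Nonempty := by
        rw [← Finset.card_pos, Finset.card_compl]
        simpa using by omega
      obtain ⟨i0, hi0, hmax⟩ := Finset.exists_max_image sᶜ p hcompl
      have hi0s : i0 ∉ s := Finset.mem_compl.mp hi0
      refine ⟨insert i0 s, ?_, ?_⟩
      · rw [Finset.card_insert_of_notMem hi0s, hcard]; omega
      · intro i hi j hj
        have hjs : j ∉ s := fun hjs => hj (Finset.mem_insert_of_mem hjs)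
        rcases Finset.mem_insert.mp hi with rfl | his
        · exact hmax j (Finset.mem_compl.mpr hjs)
        · exact htop i his j hjs

lemma sum_mul_le_maxPartialSum {n : ℕ} {p c : Fin n → ℝ} (hp : ∀ i, 0 ≤ p i)
    (hc0 : ∀ i, 0 ≤ c i) (hc1 : ∀ i, c i ≤ 1) {k : ℕ} (hck : ∑ i, c i ≤ (k : ℝ)) :
    ∑ i, p i * c i ≤ maxPartialSum p k := by
  obtain ⟨s, hcard, htop⟩ := exists_topSet p k
  by_cases hkn : n ≤ k
  · have h1 : ∑ i, p i * c i ≤ ∑ i, p i := by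
      apply Finset.sum_le_sum
      intro i _
      nlinarith [hp i, hc0 i, hc1 i]
    refine h1.trans (le_maxPartialSum p (s := Finset.univ) ?_)
    simpa using hkn
  · push_neg at hkn
    have hcards : s.card = k := by rw [hcard]; omega
    rcases Nat.eq_zero_or_pos k with rfl | hk
    · have hc : ∀ i, c i = 0 := by
        intro i
        have h0 : ∑ i, c i = 0 := le_antisymm (by simpa using hck)
          (Finset.sum_nonneg fun i _ => hc0 i)
        have := (Finset.sum_eq_zero_iff_of_nonneg (fun i _ => hc0 i)).mp h0
        exact this i (Finset.mem_univ i)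
      simp only [hc, mul_zero, Finset.sum_const_zero]
      exact maxPartialSum_nonneg hp 0
    · have hsne : s.Nonempty := Finset.card_pos.mp (by omega)
      obtain ⟨i0, hi0, hmin⟩ := Finset.exists_min_image s p hsne
      set μ := p i0 with hμ
      have hμ0 : 0 ≤ μ := hp i0
      have hout : ∀ j, j ∉ s → p j ≤ μ := fun j hj => htop i0 hi0 j hj
      have hsplitp : ∑ i ∈ s, p i * c i + ∑ i ∈ sᶜ, p i * c i = ∑ i, p i * c i :=
        Finset.sum_add_sum_compl s _
      have hsplitc : ∑ i ∈ s, c i + ∑ i ∈ sᶜ, c i = ∑ i, c i :=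
        Finset.sum_add_sum_compl s _
      have h1 : ∑ i ∈ sᶜ, p i * c i ≤ μ * ∑ i ∈ sᶜ, c i := by
        rw [Finset.mul_sum]
        exact Finset.sum_le_sum fun i hi =>
          mul_le_mul_of_nonneg_right (hout i (Finset.mem_compl.mp hi)) (hc0 i)
      have h2 : μ * ∑ i ∈ s, (1 - c i) ≤ ∑ i ∈ s, p i * (1 - c i) := by
        rw [Finset.mul_sum]
        exact Finset.sum_le_sum fun i hi =>
          mul_le_mul_of_nonneg_right (hmin i hi) (by linarith [hc1 i])
      have e1 : ∑ i ∈ s, p i * (1 - c i) = ∑ i ∈ s, p i - ∑ i ∈ s, p i * c i := by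
        rw [← Finset.sum_sub_distrib]
        exact Finset.sum_congr rfl fun i _ => by ring
      have e2 : ∑ i ∈ s, (1 - c i) = (k : ℝ) - ∑ i ∈ s, c i := by
        rw [Finset.sum_sub_distrib, Finset.sum_const, hcards, nsmul_eq_mul, mul_one]
      have h3 : ∑ i ∈ sᶜ, c i ≤ (k : ℝ) - ∑ i ∈ s, c i := by linarith
      have h4 : μ * ∑ i ∈ sᶜ, c i ≤ μ * ((k : ℝ) - ∑ i ∈ s, c i) :=
        mul_le_mul_of_nonneg_left h3 hμ0
      have key : ∑ i, p i * c i ≤ ∑ i ∈ s, p i := by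
        rw [e2] at h2
        rw [e1] at h2
        linarith
      exact key.trans (le_maxPartialSum p (le_of_eq hcards))

lemma majorizes_vecMul {n m : ℕ} {p : Fin n → ℝ} (hp : ∀ i, 0 ≤ p i)
    {D : Matrix (Fin n) (Fin m) ℝ} (h0 : ∀ i j, 0 ≤ D i j)
    (hrow : ∀ i, ∑ j, D i j = 1) (hcol : ∀ j, ∑ i, D i j = 1) :
    Majorizes p (Matrix.vecMul p D) := by
  intro k
  apply maxPartialSum_le
  intro s hs
  have hswap : ∑ j ∈ s, Matrix.vecMul p D j = ∑ i, p i * (∑ j ∈ s, D i j) := by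
    simp_rw [vecMul_apply, Finset.mul_sum]
    rw [Finset.sum_comm]
  rw [hswap]
  apply sum_mul_le_maxPartialSum hp
  · intro i; exact Finset.sum_nonneg fun j _ => h0 i j
  · intro i
    calc ∑ j ∈ s, D i j ≤ ∑ j, D i j :=
          Finset.sum_le_sum_of_subset_of_nonneg (Finset.subset_univ s)
            (fun j _ _ => h0 i j)
      _ = 1 := hrow i
  · have : ∑ i, ∑ j ∈ s, D i j = (s.card : ℝ) := by
      erw [Finset.sum_comm]
      simp_rw [hcol]
      simp
    rw [this]
    exact_mod_cast hs

lemma maxPartialSum_uniform_le {b : ℕ} (k : ℕ) {s : Finset (Fin b)} (hs : s.card ≤ k) :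
    ∑ i ∈ s, uniform b i = (s.card : ℝ) * (b : ℝ)⁻¹ := by
  simp [uniform, Finset.sum_const, nsmul_eq_mul]

lemma uniform_majorizes_uniform {a b : ℕ} (ha : 0 < a) (hab : a ≤ b) :
    Majorizes (uniform a) (uniform b) := by
  have hb : 0 < b := lt_of_lt_of_le ha hab
  intro k
  apply maxPartialSum_le
  intro s hs
  obtain ⟨t, -, htc⟩ := Finset.exists_subset_card_eq
    (s := (Finset.univ : Finset (Fin a))) (n := min k a) (by simpa using Nat.min_le_right k a)
  have hval : ∑ i ∈ t, uniform a i = ((min k a : ℕ) : ℝ) * (a : ℝ)⁻¹ := by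
    rw [maxPartialSum_uniform_le k (le_trans (le_of_eq htc) (Nat.min_le_left k a)), htc]
  have hcb : s.card ≤ b := by simpa using Finset.card_le_univ s
  have hnat : s.card * a ≤ min k a * b := by
    rcases le_total k a with h | h
    · rw [min_eq_left h]
      exact Nat.mul_le_mul hs hab
    · rw [min_eq_right h]
      calc s.card * a ≤ b * a := Nat.mul_le_mul_right a hcb
        _ = a * b := Nat.mul_comm b a
  have hreal : (s.card : ℝ) * (b : ℝ)⁻¹ ≤ ((min k a : ℕ) : ℝ) * (a : ℝ)⁻¹ := by
    rw [← div_eq_mul_inv, ← div_eq_mul_inv, div_le_div_iff₀ (by exact_mod_cast hb) (by exact_mod_cast ha)]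
    exact_mod_cast hnat
  calc ∑ i ∈ s, uniform b i = (s.card : ℝ) * (b : ℝ)⁻¹ := maxPartialSum_uniform_le k hs
    _ ≤ ((min k a : ℕ) : ℝ) * (a : ℝ)⁻¹ := hreal
    _ = ∑ i ∈ t, uniform a i := hval.symm
    _ ≤ maxPartialSum (uniform a) k :=
        le_maxPartialSum (uniform a) (le_trans (le_of_eq htc) (Nat.min_le_left k a))

/-! ### Entropy of uniform distributions -/

variable {H : (n : ℕ) → (Fin n → ℝ) → ℝ}

lemma H_one (hH : IsEntropy H) : H 1 (fun _ : Fin 1 => (1 : ℝ)) = 0 := by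
  have h := hH.additive (fun _ : Fin 1 => (1 : ℝ)) (fun _ : Fin 1 => (1 : ℝ))
    isProbVec_one isProbVec_one
  have hk : kron (fun _ : Fin 1 => (1 : ℝ)) (fun _ : Fin 1 => (1 : ℝ))
      = fun _ : Fin (1 * 1) => (1 : ℝ) := by
    funext i; simp [kron]
  rw [hk] at h
  have he : H (1 * 1) (fun _ : Fin (1 * 1) => (1 : ℝ)) = H 1 (fun _ : Fin 1 => (1 : ℝ)) := rfl
  rw [he] at h
  linarith

lemma H_unif_congr {a b : ℕ} (hab : a = b) : H a (uniform a) = H b (uniform b) := by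
  cases hab; rfl

lemma H_unif_mul (hH : IsEntropy H) {a b : ℕ} (ha : 0 < a) (hb : 0 < b) :
    H (a * b) (uniform (a * b)) = H a (uniform a) + H b (uniform b) := by
  have h := hH.additive (uniform a) (uniform b) (isProbVec_uniform ha) (isProbVec_uniform hb)
  rwa [kron_uniform] at h

lemma H_two (hH : IsEntropy H) : H 2 (uniform 2) = 1 := by
  rw [hH.normalized]
  exact Real.logb_self_eq_one (by norm_num)

lemma H_unif_pow (hH : IsEntropy H) {a : ℕ} (ha : 0 < a) (m : ℕ) :
    H (a ^ m) (uniform (a ^ m)) = (m : ℝ) * H a (uniform a) := by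
  induction m with
  | zero =>
    rw [H_unif_congr (H := H) (pow_zero a), uniform_one, H_one hH]
    simp
  | succ m ih =>
    rw [H_unif_congr (H := H) (pow_succ a m), H_unif_mul hH (pow_pos ha m) ha, ih]
    push_cast
    ring

lemma H_uniform (hH : IsEntropy H) {k : ℕ} (hk : 0 < k) :
    H k (uniform k) = Real.logb 2 (k : ℝ) := by
  set c := H k (uniform k) with hc
  set L := Real.logb 2 (k : ℝ) with hL
  have hk1 : (1 : ℝ) ≤ (k : ℝ) := by exact_mod_cast hk
  have hL0 : 0 ≤ L := Real.logb_nonneg (by norm_num) hk1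
  have key : ∀ m : ℕ, 0 < m → |c - L| ≤ 1 / (m : ℝ) := by
    intro m hm
    have hm' : (0 : ℝ) < m := by exact_mod_cast hm
    set a := Nat.floor ((m : ℝ) * L) with ha
    have h1 : (a : ℝ) ≤ (m : ℝ) * L := Nat.floor_le (by positivity)
    have h2 : (m : ℝ) * L < (a : ℝ) + 1 := Nat.lt_floor_add_one _
    have hkm : (2 : ℝ) ^ ((m : ℝ) * L) = (k : ℝ) ^ m := by
      have : (m : ℝ) * L = Real.logb 2 ((k : ℝ) ^ m) := by
        rw [Real.logb_pow]
      rw [this]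
      exact Real.rpow_logb (by norm_num) (by norm_num) (by positivity)
    have hpow1 : (2 : ℕ) ^ a ≤ k ^ m := by
      have hr : (2 : ℝ) ^ (a : ℝ) ≤ (2 : ℝ) ^ ((m : ℝ) * L) :=
        Real.rpow_le_rpow_of_exponent_le one_le_two h1
      rw [hkm, Real.rpow_natCast] at hr
      have : ((2 : ℕ) ^ a : ℝ) ≤ ((k ^ m : ℕ) : ℝ) := by push_cast; exact hr
      exact_mod_cast this
    have hpow2 : k ^ m ≤ 2 ^ (a + 1) := by
      have hr : (2 : ℝ) ^ ((m : ℝ) * L) ≤ (2 : ℝ) ^ (((a : ℝ) + 1)) :=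
        Real.rpow_le_rpow_of_exponent_le one_le_two h2.le
      rw [hkm] at hr
      have h' : ((a : ℝ) + 1) = ((a + 1 : ℕ) : ℝ) := by push_cast; ring
      rw [h', Real.rpow_natCast] at hr
      have : ((k ^ m : ℕ) : ℝ) ≤ ((2 ^ (a + 1) : ℕ) : ℝ) := by push_cast; exact hr
      exact_mod_cast this
    have e2 : ∀ j : ℕ, H (2 ^ j) (uniform (2 ^ j)) = (j : ℝ) := by
      intro j
      rw [H_unif_pow hH (by norm_num) j, H_two hH, mul_one]
    have m1 : (a : ℝ) ≤ (m : ℝ) * c := by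
      have hmono := hH.mono (uniform (2 ^ a)) (uniform (k ^ m))
        (isProbVec_uniform (pow_pos (by norm_num) a))
        (isProbVec_uniform (pow_pos hk m))
        (uniform_majorizes_uniform (pow_pos (by norm_num) a) hpow1)
      rwa [e2 a, H_unif_pow hH hk m] at hmono
    have m2 : (m : ℝ) * c ≤ (a : ℝ) + 1 := by
      have hmono := hH.mono (uniform (k ^ m)) (uniform (2 ^ (a + 1)))
        (isProbVec_uniform (pow_pos hk m))
        (isProbVec_uniform (pow_pos (by norm_num) (a + 1)))
        (uniform_majorizes_uniform (pow_pos hk m) hpow2)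
      rw [H_unif_pow hH hk m, e2 (a + 1)] at hmono
      push_cast at hmono
      linarith
    rw [abs_le]
    constructor
    · rw [neg_le, le_div_iff₀ hm']
      nlinarith
    · rw [le_div_iff₀ hm']
      nlinarith
  by_contra hne
  have habs : 0 < |c - L| := abs_pos.mpr (sub_ne_zero.mpr hne)
  obtain ⟨m, hm⟩ := exists_nat_one_div_lt habs
  have := key (m + 1) (Nat.succ_pos m)
  have hcast : ((m + 1 : ℕ) : ℝ) = (m : ℝ) + 1 := by push_cast; ring
  rw [hcast] at this
  linarith

/-! ### The key comparison lemma -/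

lemma key_comparison (hH : IsEntropy H) {k k' : ℕ} {r : Fin k → ℝ} {r' : Fin k' → ℝ}
    (hr : IsProbVec r) (hr' : IsProbVec r')
    (hmaj : RelMaj r' (uniform k') r (uniform k)) :
    Real.logb 2 (k : ℝ) - H k r ≤ Real.logb 2 (k' : ℝ) - H k' r' := by
  have hk : 0 < k := isProbVec_pos hr
  have hk' : 0 < k' := isProbVec_pos hr'
  have hkR : (0 : ℝ) < k := by exact_mod_cast hk
  have hk'R : (0 : ℝ) < k' := by exact_mod_cast hk'
  obtain ⟨W, hW, hWr, hWu⟩ := hmaj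
  have hcolsum : ∀ y : Fin k, ∑ i, W i y = (k' : ℝ) / k := by
    intro y
    have h := congrFun hWu y
    rw [vecMul_apply] at h
    have : ∑ i : Fin k', (k' : ℝ)⁻¹ * W i y = (k : ℝ)⁻¹ := h
    rw [← Finset.mul_sum] at this
    field_simp at this ⊢
    linarith
  set D : Matrix (Fin (k' * k)) (Fin (k * k')) ℝ := fun x y =>
    W (finProdFinEquiv.symm x).1 (finProdFinEquiv.symm y).1 / (k' : ℝ) with hD
  have h0 : ∀ x y, 0 ≤ D x y := fun x y => div_nonneg (hW.1 _ _) hk'R.le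
  have hrow : ∀ x, ∑ y, D x y = 1 := by
    intro x
    show ∑ y : Fin (k * k'), W (finProdFinEquiv.symm x).1 (finProdFinEquiv.symm y).1 / (k' : ℝ) = 1
    rw [sum_kron (fun a b => W (finProdFinEquiv.symm x).1 a / (k' : ℝ))]
    have : ∀ a, ∑ _b : Fin k', W (finProdFinEquiv.symm x).1 a / (k' : ℝ)
        = W (finProdFinEquiv.symm x).1 a := by
      intro a
      rw [Finset.sum_const, Finset.card_univ, Fintype.card_fin, nsmul_eq_mul]
      field_simp
    simp_rw [this]
    exact hW.2 _
  have hcol : ∀ y, ∑ x, D x y = 1 := by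
    intro y
    show ∑ x : Fin (k' * k), W (finProdFinEquiv.symm x).1 (finProdFinEquiv.symm y).1 / (k' : ℝ) = 1
    rw [sum_kron (fun a b => W a (finProdFinEquiv.symm y).1 / (k' : ℝ))]
    have : ∀ a : Fin k', ∑ _b : Fin k, W a (finProdFinEquiv.symm y).1 / (k' : ℝ)
        = (k : ℝ) * (W a (finProdFinEquiv.symm y).1 / (k' : ℝ)) := by
      intro a
      rw [Finset.sum_const, Finset.card_univ, Fintype.card_fin, nsmul_eq_mul]
    simp_rw [this, ← Finset.mul_sum, ← Finset.sum_div, hcolsum]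
    field_simp
  have himg : Matrix.vecMul (kron r' (uniform k)) D = kron r (uniform k') := by
    funext y
    rw [vecMul_apply]
    show ∑ x : Fin (k' * k), (r' (finProdFinEquiv.symm x).1 * uniform k (finProdFinEquiv.symm x).2) *
        (W (finProdFinEquiv.symm x).1 (finProdFinEquiv.symm y).1 / (k' : ℝ)) = kron r (uniform k') y
    rw [sum_kron (fun a b => (r' a * uniform k b) * (W a (finProdFinEquiv.symm y).1 / (k' : ℝ)))]
    have hinner : ∀ a : Fin k', ∑ b : Fin k,
        (r' a * uniform k b) * (W a (finProdFinEquiv.symm y).1 / (k' : ℝ))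
        = r' a * W a (finProdFinEquiv.symm y).1 / (k' : ℝ) := by
      intro a
      simp only [uniform]
      rw [Finset.sum_const, Finset.card_univ, Fintype.card_fin, nsmul_eq_mul]
      field_simp
    simp_rw [hinner]
    rw [← Finset.sum_div, ← vecMul_apply r' W, hWr]
    show r (finProdFinEquiv.symm y).1 / (k' : ℝ)
        = r (finProdFinEquiv.symm y).1 * uniform k' (finProdFinEquiv.symm y).2
    simp only [uniform]
    ring
  have hkprob : IsProbVec (kron r' (uniform k)) := kron_isProbVec hr' (isProbVec_uniform hk)
  have hkprob2 : IsProbVec (kron r (uniform k')) := kron_isProbVec hr (isProbVec_uniform hk')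
  have hmajz : Majorizes (kron r' (uniform k)) (kron r (uniform k')) := by
    have := majorizes_vecMul hkprob.1 h0 hrow hcol
    rwa [himg] at this
  have hmono := hH.mono _ _ hkprob hkprob2 hmajz
  rw [hH.additive _ _ hr' (isProbVec_uniform hk), hH.additive _ _ hr (isProbVec_uniform hk'),
    H_uniform hH hk, H_uniform hH hk'] at hmono
  linarith

/-! ### Witness types -/

structure MinW {n : ℕ} (H : (n : ℕ) → (Fin n → ℝ) → ℝ) (p q : Fin n → ℝ) where
  k : ℕ
  r : Fin k → ℝ
  prob : IsProbVec r
  maj : RelMaj p q r (uniform k)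

structure MaxW {n : ℕ} (H : (n : ℕ) → (Fin n → ℝ) → ℝ) (p q : Fin n → ℝ) where
  k : ℕ
  r : Fin k → ℝ
  prob : IsProbVec r
  maj : RelMaj r (uniform k) p q

noncomputable def MinW.rval {n : ℕ} {p q : Fin n → ℝ}
    (w : MinW H p q) : ℝ := Real.logb 2 (w.k : ℝ) - H w.k w.r

noncomputable def MaxW.rval {n : ℕ} {p q : Fin n → ℝ}
    (w : MaxW H p q) : ℝ := Real.logb 2 (w.k : ℝ) - H w.k w.r

lemma dmin_eq {n : ℕ} (p q : Fin n → ℝ) :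
    DminExt H n p q = ⨆ w : MinW H p q, ENNReal.ofReal w.rval := by
  apply le_antisymm
  · exact iSup_le fun k => iSup_le fun r => iSup_le fun hp => iSup_le fun hm =>
      le_iSup_of_le ⟨k, r, hp, hm⟩ le_rfl
  · exact iSup_le fun w =>
      le_iSup_of_le w.k (le_iSup_of_le w.r (le_iSup_of_le w.prob (le_iSup_of_le w.maj le_rfl)))

lemma dmax_eq {n : ℕ} (p q : Fin n → ℝ) :
    DmaxExt H n p q = ⨅ w : MaxW H p q, ENNReal.ofReal w.rval := by
  apply le_antisymm
  · exact le_iInf fun w =>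
      iInf_le_of_le w.k (iInf_le_of_le w.r (iInf_le_of_le w.prob (iInf_le_of_le w.maj le_rfl)))
  · exact le_iInf fun k => le_iInf fun r => le_iInf fun hp => le_iInf fun hm =>
      iInf_le_of_le ⟨k, r, hp, hm⟩ le_rfl

def MinW.trivial {n : ℕ} {p q : Fin n → ℝ} (H : (n : ℕ) → (Fin n → ℝ) → ℝ)
    (hp : IsProbVec p) (hq : IsProbVec q) : MinW H p q :=
  ⟨1, fun _ => 1, isProbVec_one, relMaj_to_one hp hq⟩

lemma MinW.trivial_rval {n : ℕ} {p q : Fin n → ℝ} (hH : IsEntropy H)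
    (hp : IsProbVec p) (hq : IsProbVec q) : (MinW.trivial H hp hq).rval = 0 := by
  show Real.logb 2 ((1 : ℕ) : ℝ) - H 1 (fun _ => 1) = 0
  rw [Nat.cast_one, Real.logb_one, H_one hH]
  ring

lemma val_kron (hH : IsEntropy H) {ka kb : ℕ} {ra : Fin ka → ℝ} {rb : Fin kb → ℝ}
    (ha : IsProbVec ra) (hb : IsProbVec rb) :
    Real.logb 2 ((ka * kb : ℕ) : ℝ) - H (ka * kb) (kron ra rb)
      = (Real.logb 2 (ka : ℝ) - H ka ra) + (Real.logb 2 (kb : ℝ) - H kb rb) := by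
  have hka : 0 < ka := isProbVec_pos ha
  have hkb : 0 < kb := isProbVec_pos hb
  rw [hH.additive _ _ ha hb]
  have : ((ka * kb : ℕ) : ℝ) = (ka : ℝ) * (kb : ℝ) := by push_cast; ring
  rw [this, Real.logb_mul (by exact_mod_cast hka.ne') (by exact_mod_cast hkb.ne')]
  ring

noncomputable def MinW.kron {n m : ℕ} {p q : Fin n → ℝ} {p' q' : Fin m → ℝ}
    (wa : MinW H p q) (wb : MinW H p' q') : MinW H (kron p p') (kron q q') :=
  ⟨wa.k * wb.k, _root_.kron wa.r wb.r, kron_isProbVec wa.prob wb.prob, by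
    have := relMaj_kron wa.maj wb.maj
    rwa [kron_uniform] at this⟩

lemma MinW.kron_rval (hH : IsEntropy H) {n m : ℕ} {p q : Fin n → ℝ} {p' q' : Fin m → ℝ}
    (wa : MinW H p q) (wb : MinW H p' q') :
    (wa.kron wb).rval = wa.rval + wb.rval :=
  val_kron hH wa.prob wb.prob

noncomputable def MaxW.kron {n m : ℕ} {p q : Fin n → ℝ} {p' q' : Fin m → ℝ}
    (wa : MaxW H p q) (wb : MaxW H p' q') : MaxW H (kron p p') (kron q q') :=
  ⟨wa.k * wb.k, _root_.kron wa.r wb.r, kron_isProbVec wa.prob wb.prob, by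
    have := relMaj_kron wa.maj wb.maj
    rwa [kron_uniform] at this⟩

lemma MaxW.kron_rval (hH : IsEntropy H) {n m : ℕ} {p q : Fin n → ℝ} {p' q' : Fin m → ℝ}
    (wa : MaxW H p q) (wb : MaxW H p' q') :
    (wa.kron wb).rval = wa.rval + wb.rval :=
  val_kron hH wa.prob wb.prob

lemma minW_improve (hH : IsEntropy H) {n : ℕ} {p q : Fin n → ℝ}
    (hp : IsProbVec p) (hq : IsProbVec q) (w : MinW H p q) :
    ∃ w' : MinW H p q, 0 ≤ w'.rval ∧ ENNReal.ofReal w.rval ≤ ENNReal.ofReal w'.rval := by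
  by_cases h : 0 ≤ w.rval
  · exact ⟨w, h, le_rfl⟩
  · refine ⟨MinW.trivial H hp hq, ?_, ?_⟩
    · rw [MinW.trivial_rval hH hp hq]
    · rw [MinW.trivial_rval hH hp hq]
      push_neg at h
      rw [ENNReal.ofReal_of_nonpos h.le]
      exact zero_le

end Stmt9Aux

/-- both extensions satisfy the data-processing inequality and vanish at
`(1‖1)` (i.e. are monotone divergences), `D̲_H ≤ D̄_H`, and `D̲_H` is superadditive while
`D̄_H` is subadditive for Kronecker products. -/
theorem stmt9 (H : (n : ℕ) → (Fin n → ℝ) → ℝ) (hH : IsEntropy H) :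
    IsMonotoneDivergence (DmaxExt H) ∧ IsMonotoneDivergence (DminExt H) ∧
    (∀ (n : ℕ) (p q : Fin n → ℝ), IsProbVec p → IsProbVec q →
      DminExt H n p q ≤ DmaxExt H n p q) ∧
    (∀ (n m : ℕ) (p q : Fin n → ℝ) (p' q' : Fin m → ℝ),
      IsProbVec p → IsProbVec q → IsProbVec p' → IsProbVec q' →
      DminExt H n p q + DminExt H m p' q' ≤ DminExt H (n * m) (kron p p') (kron q q') ∧
      DmaxExt H (n * m) (kron p p') (kron q q') ≤ DmaxExt H n p q + DmaxExt H m p' q') := by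
  classical
  open Stmt9Aux in
  refine ⟨⟨?_, ?_⟩, ⟨?_, ?_⟩, ?_, ?_⟩
  · -- DPI for DmaxExt
    intro n m p q p' q' hp hq hp' hq' h
    rw [dmax_eq, dmax_eq]
    exact le_iInf fun w => iInf_le_of_le ⟨w.k, w.r, w.prob, relMaj_trans w.maj h⟩ le_rfl
  · -- normalization for DmaxExt
    apply le_antisymm _ zero_le
    rw [dmax_eq]
    have hmaj : RelMaj (fun _ : Fin 1 => (1 : ℝ)) (uniform 1)
        (fun _ : Fin 1 => (1 : ℝ)) (fun _ : Fin 1 => (1 : ℝ)) := by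
      rw [uniform_one]
      have := relMaj_to_one isProbVec_one isProbVec_one
      rwa [uniform_one] at this
    refine iInf_le_of_le ⟨1, fun _ => 1, isProbVec_one, hmaj⟩ ?_
    have : (Real.logb 2 ((1 : ℕ) : ℝ) - H 1 (fun _ => 1)) = 0 := by
      rw [Nat.cast_one, Real.logb_one, H_one hH]; ring
    show ENNReal.ofReal (Real.logb 2 ((1 : ℕ) : ℝ) - H 1 (fun _ => 1)) ≤ 0
    rw [this]
    simp
  · -- DPI for DminExt
    intro n m p q p' q' hp hq hp' hq' h
    rw [dmin_eq, dmin_eq]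
    exact iSup_le fun w => le_iSup_of_le ⟨w.k, w.r, w.prob, relMaj_trans h w.maj⟩ le_rfl
  · -- normalization for DminExt
    apply le_antisymm _ zero_le
    rw [dmin_eq]
    apply iSup_le
    intro w
    obtain ⟨W, hW, h1, h2⟩ := w.maj
    have hru : w.r = uniform w.k := by rw [← h1]; exact h2
    have hk : 0 < w.k := isProbVec_pos w.prob
    have : w.rval = 0 := by
      show Real.logb 2 (w.k : ℝ) - H w.k w.r = 0
      rw [hru, H_uniform hH hk]
      ring
    rw [this]
    simp
  · -- DminExt ≤ DmaxExt
    intro n p q hp hq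
    rw [dmin_eq, dmax_eq]
    exact iSup_le fun wa => le_iInf fun wb =>
      ENNReal.ofReal_le_ofReal
        (key_comparison hH wa.prob wb.prob (relMaj_trans wb.maj wa.maj))
  · -- additivity bounds
    intro n m p q p' q' hp hq hp' hq'
    constructor
    · -- superadditivity of DminExt
      rw [dmin_eq p q, dmin_eq p' q', dmin_eq (kron p p') (kron q q')]
      have hne1 : Nonempty (MinW H p q) := ⟨MinW.trivial H hp hq⟩
      have hne2 : Nonempty (MinW H p' q') := ⟨MinW.trivial H hp' hq'⟩
      refine ENNReal.iSup_add_iSup_le ?_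
      intro wa wb
      obtain ⟨wa', ha0, hale⟩ := minW_improve hH hp hq wa
      obtain ⟨wb', hb0, hble⟩ := minW_improve hH hp' hq' wb
      calc ENNReal.ofReal wa.rval + ENNReal.ofReal wb.rval
          ≤ ENNReal.ofReal wa'.rval + ENNReal.ofReal wb'.rval := add_le_add hale hble
        _ = ENNReal.ofReal (wa'.rval + wb'.rval) := (ENNReal.ofReal_add ha0 hb0).symm
        _ = ENNReal.ofReal ((wa'.kron wb').rval) := by rw [MinW.kron_rval hH]
        _ ≤ ⨆ w : MinW H (kron p p') (kron q q'), ENNReal.ofReal w.rval :=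
            le_iSup (fun w : MinW H (kron p p') (kron q q') => ENNReal.ofReal w.rval)
              (wa'.kron wb')
    · -- subadditivity of DmaxExt
      rw [dmax_eq p q, dmax_eq p' q', dmax_eq (kron p p') (kron q q')]
      rw [ENNReal.iInf_add]
      refine le_iInf fun wa => ?_
      rw [ENNReal.add_iInf]
      refine le_iInf fun wb => ?_
      refine iInf_le_of_le (wa.kron wb) ?_
      rw [show ((wa.kron wb).rval) = wa.rval + wb.rval from MaxW.kron_rval hH wa wb]
      exact ENNReal.ofReal_add_le
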